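/- Let N, D ∈ ℂ[z] be polynomials with deg N ≤ deg D, and let 0 < α ≤ π/2. Define the sector S_α := {0} ∪ {z ∈ ℂ ∖ {0} : |arg(−z)| ≤ α}. Assume D(z) ≠ 0 for every z ∈ S_α, and assume |N(z)| ≤ |D(z)| for every boundary point z of the form z = −y·e^{iα} or z = −y·e^{−iα} with y ≥ 0 real. Then |N(z)| ≤ |D(z)| for every z ∈ S_α. -/

import Mathlib

open Complex

/-- The closed sector of half-angle `α` opening into the left half-plane:
`S_α = {0} ∪ {z ≠ 0 : |arg(−z)| ≤ α}`. -/
def sector (α : ℝ) : Set ℂ := {0} ∪ {z : ℂ | z ≠ 0 ∧ |Complex.arg (-z)| ≤ α}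

open Filter Polynomial Bornology Topology Set

lemma aux_pow_div (P : Polynomial ℂ) (n : ℕ) (hn : P.natDegree ≤ n) :
    Tendsto (fun z : ℂ => P.eval z / z ^ n) (cobounded ℂ) (𝓝 (P.coeff n)) := by
  have h1 : Tendsto (fun z : ℂ => ∑ i ∈ Finset.range (n + 1), P.coeff i * (z⁻¹) ^ (n - i))
      (cobounded ℂ) (𝓝 (∑ i ∈ Finset.range (n + 1), P.coeff i * (0 : ℂ) ^ (n - i))) := by
    refine tendsto_finset_sum _ fun i _ => ?_
    exact (tendsto_inv₀_cobounded.pow _).const_mul _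
  have h2 : (∑ i ∈ Finset.range (n + 1), P.coeff i * (0 : ℂ) ^ (n - i)) = P.coeff n := by
    rw [Finset.sum_eq_single n]
    · simp
    · intro i hi hne
      have : 0 < n - i := Nat.sub_pos_of_lt (Nat.lt_of_le_of_ne (Nat.lt_succ_iff.mp (Finset.mem_range.mp hi)) hne)
      simp [zero_pow this.ne']
    · intro h; exact absurd (Finset.self_mem_range_succ n) h
  rw [h2] at h1
  refine h1.congr' ?_
  have hev : ∀ᶠ z : ℂ in cobounded ℂ, (1 : ℝ) ≤ ‖z‖ := by
    rw [← comap_norm_atTop]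
    exact tendsto_comap.eventually (eventually_ge_atTop 1)
  filter_upwards [hev] with z hz
  have hz0 : z ≠ 0 := by
    intro h; rw [h] at hz; simp at hz; linarith
  rw [eval_eq_sum_range' (Nat.lt_succ_of_le hn), Finset.sum_div]
  refine Finset.sum_congr rfl fun i hi => ?_
  have hin : i ≤ n := Nat.lt_succ_iff.mp (Finset.mem_range.mp hi)
  rw [mul_div_assoc]
  congr 1
  have hzn : z ^ n = z ^ i * z ^ (n - i) := by rw [← pow_add, Nat.add_sub_cancel' hin]
  rw [hzn, div_mul_cancel_left₀ (pow_ne_zero _ hz0), inv_pow]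

/-- The ratio of two polynomials with `deg N ≤ deg D` is eventually bounded near infinity. -/
lemma aux_ratio_bounded (N D : Polynomial ℂ) (hdeg : N.degree ≤ D.degree) (hD0 : D ≠ 0) :
    ∃ M : ℝ, ∃ R : ℝ, ∀ z : ℂ, R ≤ ‖z‖ → ‖N.eval z / D.eval z‖ ≤ M := by
  set n := D.natDegree
  have hN : N.natDegree ≤ n := natDegree_le_natDegree hdeg
  have t1 := aux_pow_div N n hN
  have t2 := aux_pow_div D n le_rfl
  have hlc : D.coeff n ≠ 0 := mt Polynomial.leadingCoeff_eq_zero.mp hD0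
  have t3 : Tendsto (fun z : ℂ => (N.eval z / z ^ n) / (D.eval z / z ^ n)) (cobounded ℂ)
      (𝓝 (N.coeff n / D.coeff n)) := t1.div t2 hlc
  have t4 : Tendsto (fun z : ℂ => N.eval z / D.eval z) (cobounded ℂ)
      (𝓝 (N.coeff n / D.coeff n)) := by
    refine t3.congr' ?_
    have hev : ∀ᶠ z : ℂ in cobounded ℂ, (1 : ℝ) ≤ ‖z‖ := by
      rw [← comap_norm_atTop]
      exact tendsto_comap.eventually (eventually_ge_atTop 1)
    filter_upwards [hev] with z hz
    have hz0 : z ≠ 0 := by intro h; rw [h] at hz; simp at hz; linarith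
    by_cases hDz : D.eval z = 0
    · simp [hDz]
    · rw [div_div_div_cancel_right₀ (pow_ne_zero n hz0)]
  have hb : ∀ᶠ z : ℂ in cobounded ℂ, ‖N.eval z / D.eval z‖ ≤ ‖N.coeff n / D.coeff n‖ + 1 :=
    t4.norm.eventually_le_const (lt_add_one _)
  rw [← comap_norm_atTop, eventually_comap] at hb
  rw [eventually_atTop] at hb
  obtain ⟨R, hR⟩ := hb
  exact ⟨‖N.coeff n / D.coeff n‖ + 1, R, fun z hz => hR ‖z‖ hz z rfl⟩

lemma aux_mem_sector {α : ℝ} (hα0 : 0 < α) (hαπ : α ≤ Real.pi / 2) {w : ℂ}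
    (h : |w.im| ≤ α) : -Complex.exp w ∈ sector α := by
  refine Or.inr ⟨neg_ne_zero.mpr (Complex.exp_ne_zero w), ?_⟩
  rw [neg_neg]
  have hπ : α < Real.pi := lt_of_le_of_lt hαπ (by linarith [Real.pi_pos])
  have h1 : -Real.pi < w.im := by
    have := abs_le.mp h
    linarith
  have h2 : w.im ≤ Real.pi := by
    have := abs_le.mp h
    linarith
  have : Complex.arg (Complex.exp w) = w.im := by
    rw [← Complex.log_im, Complex.log_exp h1 h2]
  rwa [this]



/-- **Maximum modulus on a sector.**  If `deg N ≤ deg D`, `D` has no zeros in the sector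
`S_α` (`0 < α ≤ π/2`), and `|N| ≤ |D|` on the two boundary rays `z = −y e^{±iα}`, `y ≥ 0`,
then `|N| ≤ |D|` on all of `S_α`. -/
theorem max_modulus_sector (N D : Polynomial ℂ) (hdeg : N.degree ≤ D.degree)
    (α : ℝ) (hα0 : 0 < α) (hα : α ≤ Real.pi / 2)
    (hD : ∀ z ∈ sector α, D.eval z ≠ 0)
    (hbd : ∀ y : ℝ, 0 ≤ y →
      ‖N.eval (-(↑y * Complex.exp (↑α * Complex.I)))‖ ≤
        ‖D.eval (-(↑y * Complex.exp (↑α * Complex.I)))‖ ∧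
      ‖N.eval (-(↑y * Complex.exp (-↑α * Complex.I)))‖ ≤
        ‖D.eval (-(↑y * Complex.exp (-↑α * Complex.I)))‖) :
    ∀ z ∈ sector α, ‖N.eval z‖ ≤ ‖D.eval z‖ := by
  have h0mem : (0 : ℂ) ∈ sector α := Or.inl rfl
  have hD00 : D.eval 0 ≠ 0 := hD 0 h0mem
  have hDne : D ≠ 0 := fun h => hD00 (by simp [h])
  -- the auxiliary function on the strip
  set g : ℂ → ℂ := fun w => N.eval (-Complex.exp w) / D.eval (-Complex.exp w) with hg
  have hmem : ∀ w : ℂ, |w.im| ≤ α → -Complex.exp w ∈ sector α :=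
    fun w hw => aux_mem_sector hα0 hα hw
  -- key: |g w| ≤ 1 on the closed strip
  have key : ∀ w : ℂ, |w.im| ≤ α → ‖g w‖ ≤ 1 := by
    intro w₀ hw₀
    have hdiff : DiffContOnCl ℂ g (Complex.im ⁻¹' Ioo (-α) α) := by
      constructor
      · intro w hw
        have hw' : |w.im| ≤ α := abs_le.mpr ⟨hw.1.le, hw.2.le⟩
        refine DifferentiableAt.differentiableWithinAt ?_
        exact ((N.differentiable.comp ((Complex.differentiable_exp).neg)).differentiableAt).div
          ((D.differentiable.comp ((Complex.differentiable_exp).neg)).differentiableAt)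
          (hD _ (hmem w hw'))
      · have hsub : closure (Complex.im ⁻¹' Ioo (-α) α) ⊆ Complex.im ⁻¹' Icc (-α) α :=
          closure_minimal (preimage_mono Ioo_subset_Icc_self)
            (IsClosed.preimage Complex.continuous_im isClosed_Icc)
        refine ContinuousOn.mono ?_ hsub
        intro w hw
        have hw' : |w.im| ≤ α := abs_le.mpr hw
        refine ContinuousAt.continuousWithinAt ?_
        exact ((N.continuous.comp (Complex.continuous_exp.neg)).continuousAt).div
          ((D.continuous.comp (Complex.continuous_exp.neg)).continuousAt)
          (hD _ (hmem w hw'))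
    have hB : ∃ c < Real.pi / (α - (-α)), ∃ B, g =O[Filter.comap (_root_.abs ∘ Complex.re) atTop
        ⊓ Filter.principal (Complex.im ⁻¹' Ioo (-α) α)] fun z => Real.exp (B * Real.exp (c * |z.re|)) := by
      refine ⟨0, by rw [sub_neg_eq_add]; exact div_pos Real.pi_pos (by linarith), 0, ?_⟩
      -- g is bounded on the far parts of the strip
      obtain ⟨M, R1, hM⟩ := aux_ratio_bounded N D hdeg hDne
      -- near 0 bound by continuity
      have hcont : ContinuousAt (fun z : ℂ => N.eval z / D.eval z) 0 :=
        (N.continuous.continuousAt).div (D.continuous.continuousAt) hD00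
      have hnear : ∀ᶠ z : ℂ in 𝓝 0, ‖N.eval z / D.eval z‖ ≤ ‖N.eval 0 / D.eval 0‖ + 1 :=
        hcont.norm.eventually_le_const (lt_add_one _)
      rw [Metric.eventually_nhds_iff] at hnear
      obtain ⟨δ, hδ0, hδ⟩ := hnear
      set M' : ℝ := max M (‖N.eval 0 / D.eval 0‖ + 1) with hM'
      set R : ℝ := max (max (Real.log (max R1 1) + 1) 1) (-(Real.log (δ / 2))) with hRdef
      rw [Asymptotics.isBigO_iff]
      refine ⟨M', ?_⟩
      rw [eventually_inf_principal]
      have h1 : ∀ᶠ w : ℂ in Filter.comap (_root_.abs ∘ Complex.re) atTop, R ≤ |w.re| :=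
        tendsto_comap.eventually (eventually_ge_atTop R)
      filter_upwards [h1] with w hR hstrip
      have hbound : ‖g w‖ ≤ M' := by
        rcases le_abs.mp hR with hre | hre
        · -- far right: |z| large
          have hz : R1 ≤ ‖(-Complex.exp w : ℂ)‖ := by
            rw [norm_neg, Complex.norm_exp]
            calc R1 ≤ max R1 1 := le_max_left _ _
              _ = Real.exp (Real.log (max R1 1)) := (Real.exp_log (lt_of_lt_of_le one_pos (le_max_right _ _))).symm
              _ ≤ Real.exp w.re := Real.exp_le_exp.mpr (by
                  have : Real.log (max R1 1) + 1 ≤ R := le_trans (le_max_left _ _) (le_max_left _ _)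
                  linarith)
          exact le_trans (hM _ hz) (le_max_left _ _)
        · -- far left: z close to 0
          have hre' : w.re ≤ Real.log (δ / 2) := by
            have : -(Real.log (δ / 2)) ≤ R := le_max_right _ _
            linarith
          have hz : dist (-Complex.exp w) 0 < δ := by
            rw [dist_zero_right, norm_neg, Complex.norm_exp]
            calc Real.exp w.re ≤ Real.exp (Real.log (δ / 2)) := Real.exp_le_exp.mpr hre'
              _ = δ / 2 := Real.exp_log (by linarith)
              _ < δ := by linarith
          exact le_trans (hδ hz) (le_max_right _ _)
      exact hbound.trans (by simp [M'])
    have hle_a : ∀ w : ℂ, w.im = -α → ‖g w‖ ≤ 1 := by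
      intro w hwim
      have hy : (0 : ℝ) ≤ Real.exp w.re := (Real.exp_pos _).le
      have hzeq : -Complex.exp w = -(↑(Real.exp w.re) * Complex.exp (-↑α * Complex.I)) := by
        rw [Complex.ofReal_exp, ← Complex.exp_add]
        congr 1
        conv_lhs => rw [← Complex.re_add_im w]
        rw [hwim]
        push_cast
        ring
      have hb := (hbd (Real.exp w.re) hy).2
      have hDz : D.eval (-Complex.exp w) ≠ 0 := hD _ (hmem w (by rw [hwim, abs_neg, abs_of_pos hα0]))
      rw [hg]
      simp only [norm_div]
      rw [div_le_one (by rw [hzeq]; rw [hzeq] at hDz; exact (norm_pos_iff.mpr hDz))]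
      rw [hzeq]
      exact hb
    have hle_b : ∀ w : ℂ, w.im = α → ‖g w‖ ≤ 1 := by
      intro w hwim
      have hy : (0 : ℝ) ≤ Real.exp w.re := (Real.exp_pos _).le
      have hzeq : -Complex.exp w = -(↑(Real.exp w.re) * Complex.exp (↑α * Complex.I)) := by
        rw [Complex.ofReal_exp, ← Complex.exp_add]
        congr 1
        conv_lhs => rw [← Complex.re_add_im w]
        rw [hwim]
      have hb := (hbd (Real.exp w.re) hy).1
      have hDz : D.eval (-Complex.exp w) ≠ 0 := hD _ (hmem w (by rw [hwim, abs_of_pos hα0]))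
      rw [hg]
      simp only [norm_div]
      rw [div_le_one (by rw [hzeq]; rw [hzeq] at hDz; exact (norm_pos_iff.mpr hDz))]
      rw [hzeq]
      exact hb
    exact PhragmenLindelof.horizontal_strip hdiff hB hle_a hle_b (abs_le.mp hw₀).1 (abs_le.mp hw₀).2
  -- conclude
  intro z hz
  rcases hz with hz | ⟨hz0, harg⟩
  · rw [Set.mem_singleton_iff] at hz
    subst hz
    have := (hbd 0 le_rfl).1
    simpa using this
  · have hw : Complex.exp (Complex.log (-z)) = -z := Complex.exp_log (neg_ne_zero.mpr hz0)
    have him : |(Complex.log (-z)).im| ≤ α := by rwa [Complex.log_im]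
    have := key (Complex.log (-z)) him
    rw [hg] at this
    simp only [hw, neg_neg] at this
    have hDz : D.eval z ≠ 0 := hD z (Or.inr ⟨hz0, harg⟩)
    rw [norm_div, div_le_one (norm_pos_iff.mpr hDz)] at this
    simpa using this
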